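/- Let X be an a-normal space with denominator function ζ, let α ≤ β be real numbers, and let (D,(r◁,r▷)_{r ∈ D}) be an [α,β]-draft on X with D a closed subset of ℝ. Then the draft admits a realisation f : X → [α,β] that is continuous and decreases denominators, i.e., den(f(x)) divides ζ(x) for every x ∈ X. -/

import Mathlib

open Classical in
/-- The denominator of a real number: the reduced denominator if rational, `0` if irrational. -/
noncomputable def den (r : ℝ) : ℕ :=
  if h : ∃ q : ℚ, (q : ℝ) = r then h.choose.den else 0

/-- `AC ζ Λ`: the points of the a-space `(X, ζ)` that may be sent into `Λ ⊆ ℝ` by a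
denominator-decreasing map. -/
def AC {X : Type*} (ζ : X → ℕ) (Λ : Set ℝ) : Set X := {x | ∃ l ∈ Λ, den l ∣ ζ x}

/-- An a-normal space structure on a topological space `X` with denominator function `ζ`. -/
def ANormal {X : Type*} [TopologicalSpace X] (ζ : X → ℕ) : Prop :=
  CompactSpace X ∧ T2Space X ∧
  (∀ n : ℕ, IsClosed {x : X | ζ x ∣ n}) ∧
  ∀ x y : X, x ≠ y → ∃ U V : Set X, IsOpen U ∧ IsOpen V ∧ x ∈ U ∧ y ∈ V ∧
    Disjoint U V ∧ ∀ z ∈ (U ∪ V)ᶜ, ζ z = 0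

/-- An `[α,β]`-draft on an a-space `(X, ζ)`. -/
def IsDraft {X : Type*} [TopologicalSpace X] (ζ : X → ℕ) (α β : ℝ)
    (D : Set ℝ) (down up : ℝ → Set X) : Prop :=
  D ⊆ Set.Icc α β ∧ α ∈ D ∧ β ∈ D ∧
  (∀ r ∈ D, IsClosed (down r)) ∧ (∀ r ∈ D, IsClosed (up r)) ∧
  up α = Set.univ ∧ down β = Set.univ ∧
  (∀ r ∈ D, down r ∪ up r = Set.univ) ∧
  (∀ r ∈ D, ∀ s ∈ D, r < s → down r ∩ up s = ∅) ∧
  (∀ r ∈ D, ∀ s ∈ D, r ≤ s → up r ∩ down s ⊆ AC ζ (Set.Icc r s))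

/-- A realisation of an `[α,β]`-draft. -/
def IsRealisation {X : Type*} (α β : ℝ) (D : Set ℝ) (down up : ℝ → Set X)
    (f : X → ℝ) : Prop :=
  (∀ x, f x ∈ Set.Icc α β) ∧
  ∀ r ∈ D, (∀ x ∈ down r, f x ∈ Set.Icc α r) ∧ (∀ x ∈ up r, f x ∈ Set.Icc r β)

section Den

lemma den_coe_rat (q : ℚ) : den (q : ℝ) = q.den := by
  unfold den
  rw [dif_pos ⟨q, rfl⟩]
  congr 1
  exact Rat.cast_injective (Exists.choose_spec (⟨q, rfl⟩ : ∃ p : ℚ, (p : ℝ) = (q:ℝ)))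

lemma den_div_int (k : ℤ) (n : ℕ) (hn : n ≠ 0) : den ((k : ℝ) / n) ∣ n := by
  have h1 : ((k : ℝ) / n) = (((k : ℚ) / (n : ℚ) : ℚ) : ℝ) := by push_cast; ring
  rw [h1, den_coe_rat]
  have := Rat.den_dvd k (n : ℤ)
  rw [Rat.divInt_eq_div] at this
  have h2 : (((k:ℚ)/(n:ℚ)).den : ℤ) ∣ (n : ℤ) := by exact_mod_cast this
  exact_mod_cast h2

lemma eq_div_of_den_dvd {r : ℝ} {n : ℕ} (hn : n ≠ 0) (h : den r ∣ n) :
    ∃ k : ℤ, r = (k : ℝ) / n := by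
  have hden : den r ≠ 0 := by
    intro h0; rw [h0] at h; exact hn (Nat.eq_zero_of_zero_dvd h)
  unfold den at h hden
  split_ifs at h hden with hq
  · obtain ⟨q, hqr⟩ := hq
    set p : ℚ := _ 
    have hp : (p : ℝ) = r := Exists.choose_spec (⟨q, hqr⟩ : ∃ q : ℚ, (q:ℝ) = r)
    obtain ⟨m, hm⟩ := h
    refine ⟨p.num * m, ?_⟩
    have hden' : (p.den : ℝ) ≠ 0 := by exact_mod_cast p.den_nz
    have hnr : (n : ℝ) = (p.den : ℝ) * m := by exact_mod_cast hm
    have hm0 : (m : ℝ) ≠ 0 := by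
      intro h0
      rw [h0, mul_zero] at hnr
      exact hn (by exact_mod_cast hnr)
    rw [← hp]
    rw [hnr]
    push_cast
    rw [Rat.cast_def]
    field_simp
  · exact absurd rfl hden

end Den

section ACsec

variable {X : Type*} (ζ : X → ℕ)

lemma AC_mono {Λ Λ' : Set ℝ} (h : Λ ⊆ Λ') : AC ζ Λ ⊆ AC ζ Λ' := by
  rintro x ⟨l, hl, hd⟩; exact ⟨l, h hl, hd⟩

lemma mem_AC_of_zero {x : X} (hx : ζ x = 0) {u v : ℝ} (huv : u ≤ v) :
    x ∈ AC ζ (Set.Icc u v) := ⟨u, ⟨le_refl u, huv⟩, by rw [hx]; exact dvd_zero _⟩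

lemma mem_AC_iff_int {x : X} (hx : ζ x ≠ 0) {u v : ℝ} :
    x ∈ AC ζ (Set.Icc u v) ↔ ∃ k : ℤ, u ≤ (k : ℝ) / (ζ x) ∧ (k : ℝ) / (ζ x) ≤ v := by
  constructor
  · rintro ⟨l, hl, hd⟩
    obtain ⟨k, hk⟩ := eq_div_of_den_dvd hx hd
    exact ⟨k, by rw [← hk]; exact hl.1, by rw [← hk]; exact hl.2⟩
  · rintro ⟨k, h1, h2⟩
    exact ⟨(k : ℝ) / (ζ x), ⟨h1, h2⟩, den_div_int k (ζ x) hx⟩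

/-- an integer multiple of `1/n` exists in any interval of length `≥ 1/n`. -/
lemma exists_int_div_mem {n : ℕ} (hn : n ≠ 0) {u v : ℝ} (h : 1 / (n:ℝ) ≤ v - u) :
    ∃ k : ℤ, u ≤ (k : ℝ) / n ∧ (k : ℝ) / n ≤ v := by
  have hn0 : (0:ℝ) < n := by exact_mod_cast Nat.pos_of_ne_zero hn
  refine ⟨⌈u * n⌉, ?_, ?_⟩
  · rw [le_div_iff₀ hn0]; exact Int.le_ceil _
  · rw [div_le_iff₀ hn0]
    have := Int.ceil_lt_add_one (u * n)
    have h2 : u * n + 1 ≤ v * n := by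
      have := (div_le_iff₀ hn0).mp (le_trans (le_refl _) h)
      nlinarith
    linarith

end ACsec

section Sep

variable {X : Type*} [TopologicalSpace X] {ζ : X → ℕ}

lemma sep_point_closed (hX : ANormal ζ) {x : X} {B : Set X} (hB : IsClosed B) (hxB : x ∉ B) :
    ∃ U V : Set X, IsOpen U ∧ IsOpen V ∧ x ∈ U ∧ B ⊆ V ∧ Disjoint U V ∧
      ∀ z ∈ (U ∪ V)ᶜ, ζ z = 0 := by
  obtain ⟨hcomp, ht2, hN2, hN3⟩ := hX
  haveI := hcomp
  rcases B.eq_empty_or_nonempty with hBe | hBne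
  · exact ⟨Set.univ, ∅, isOpen_univ, isOpen_empty, Set.mem_univ x, by simp [hBe],
      by simp, by simp⟩
  choose U V hU hV hxU hbV hdis hz using
    fun b : B => hN3 x b (fun h => hxB (h ▸ b.2))
  have hcov2 : B ⊆ ⋃ b : B, V b := fun y hy => Set.mem_iUnion.2 ⟨⟨y, hy⟩, hbV _⟩
  obtain ⟨s, hs⟩ := (hB.isCompact).elim_finite_subcover V hV hcov2
  rcases s.eq_empty_or_nonempty with hse | hsne
  · subst hse
    simp only [Finset.notMem_empty, Set.iUnion_of_empty, Set.iUnion_empty] at hs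
    exact ⟨Set.univ, ∅, isOpen_univ, isOpen_empty, Set.mem_univ x,
      by intro y hy; exact absurd (hs hy) (Set.notMem_empty y), by simp, by simp⟩
  refine ⟨⋂ b ∈ s, U b, ⋃ b ∈ s, V b, isOpen_biInter_finset (fun b _ => hU b),
    isOpen_biUnion (fun b _ => hV b), Set.mem_biInter (fun b _ => hxU b), hs, ?_, ?_⟩
  · rw [Set.disjoint_iff]
    rintro y ⟨hy1, hy2⟩
    rw [Set.mem_iUnion₂] at hy2
    obtain ⟨b, hbs, hyb⟩ := hy2
    exact (hdis b).le_bot ⟨(Set.mem_iInter₂.mp hy1 b hbs), hyb⟩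
  · intro z hz'
    simp only [Set.mem_compl_iff, Set.mem_union, not_or, Set.mem_iInter, Set.mem_iUnion,
      not_exists, not_forall] at hz'
    obtain ⟨⟨b, hbs, hzb⟩, hzV⟩ := hz'
    exact hz b z (by simp [Set.mem_union, hzb, hzV b hbs])

lemma sep_closed_closed (hX : ANormal ζ) {A B : Set X} (hA : IsClosed A) (hB : IsClosed B)
    (hAB : Disjoint A B) :
    ∃ U V : Set X, IsOpen U ∧ IsOpen V ∧ A ⊆ U ∧ B ⊆ V ∧ Disjoint U V ∧
      ∀ z ∈ (U ∪ V)ᶜ, ζ z = 0 := by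
  haveI := hX.1
  rcases A.eq_empty_or_nonempty with hAe | hAne
  · exact ⟨∅, Set.univ, isOpen_empty, isOpen_univ, by simp [hAe], B.subset_univ,
      by simp, by simp⟩
  choose U V hU hV haU hBV hdis hz using
    fun a : A => sep_point_closed hX hB (fun h => hAB.le_bot ⟨a.2, h⟩)
  have hcov : A ⊆ ⋃ a : A, U a := fun y hy => Set.mem_iUnion.2 ⟨⟨y, hy⟩, haU _⟩
  obtain ⟨s, hs⟩ := (hA.isCompact).elim_finite_subcover U hU hcov
  rcases s.eq_empty_or_nonempty with hse | hsne
  · subst hse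
    simp only [Finset.notMem_empty, Set.iUnion_of_empty, Set.iUnion_empty] at hs
    exact ⟨∅, Set.univ, isOpen_empty, isOpen_univ,
      fun y hy => absurd (hs hy) (Set.notMem_empty y), B.subset_univ, by simp, by simp⟩
  refine ⟨⋃ a ∈ s, U a, ⋂ a ∈ s, V a, isOpen_biUnion (fun a _ => hU a),
    isOpen_biInter_finset (fun a _ => hV a), hs,
    fun y hy => Set.mem_biInter (fun a _ => hBV a hy), ?_, ?_⟩
  · rw [Set.disjoint_iff]
    rintro y ⟨hy1, hy2⟩
    rw [Set.mem_iUnion₂] at hy1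
    obtain ⟨a, has, hya⟩ := hy1
    exact (hdis a).le_bot ⟨hya, (Set.mem_iInter₂.mp hy2 a has)⟩
  · intro z hz'
    simp only [Set.mem_compl_iff, Set.mem_union, not_or, Set.mem_iUnion, not_exists,
      Set.mem_iInter, not_forall] at hz'
    obtain ⟨hzU, a, has, hza⟩ := hz'
    exact hz a z (by simp [Set.mem_union, hzU a has, hza])

end Sep

section Draft

variable {X : Type*} [TopologicalSpace X]

/-- node data: a value together with its `down` and `up` sets. -/
abbrev Nd (X : Type*) := ℝ × Set X × Set X

def Vert (ζ : X → ℕ) (a : Nd X) : Prop :=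
  IsClosed a.2.1 ∧ IsClosed a.2.2 ∧ a.2.1 ∪ a.2.2 = Set.univ ∧
  a.2.2 ∩ a.2.1 ⊆ AC ζ (Set.Icc a.1 a.1)

def Edge (ζ : X → ℕ) (a b : Nd X) : Prop :=
  a.1 < b.1 ∧ a.2.1 ∩ b.2.2 = ∅ ∧ a.2.2 ∩ b.2.1 ⊆ AC ζ (Set.Icc a.1 b.1)

variable {ζ : X → ℕ}

lemma edge_trans {a b c : Nd X} (hab : Edge ζ a b) (hb : Vert ζ b) (hbc : Edge ζ b c) :
    Edge ζ a c := by
  obtain ⟨hab1, hab2, hab3⟩ := hab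
  obtain ⟨hbc1, hbc2, hbc3⟩ := hbc
  refine ⟨lt_trans hab1 hbc1, ?_, ?_⟩
  · ext x
    simp only [Set.mem_inter_iff, Set.mem_empty_iff_false, iff_false, not_and]
    intro hx1 hx2
    have := hb.2.2.1
    have hx : x ∈ b.2.1 ∪ b.2.2 := by rw [this]; trivial
    rcases hx with hx | hx
    · exact absurd (Set.mem_inter hx hx2) (by rw [hbc2]; exact Set.notMem_empty x)
    · exact absurd (Set.mem_inter hx1 hx) (by rw [hab2]; exact Set.notMem_empty x)
  · intro x hx
    have hx' : x ∈ b.2.1 ∪ b.2.2 := by rw [hb.2.2.1]; trivial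
    rcases hx' with hx' | hx'
    · exact AC_mono ζ (Set.Icc_subset_Icc_right (le_of_lt hbc1)) (hab3 ⟨hx.1, hx'⟩)
    · exact AC_mono ζ (Set.Icc_subset_Icc_left (le_of_lt hab1)) (hbc3 ⟨hx', hx.2⟩)

lemma insertion (hX : ANormal ζ) {a b : Nd X} (ha : Vert ζ a) (hb : Vert ζ b)
    (hab : Edge ζ a b) :
    ∃ c : Nd X, c.1 = (a.1 + b.1) / 2 ∧ Vert ζ c ∧ Edge ζ a c ∧ Edge ζ c b := by
  classical
  obtain ⟨r, dr, ur⟩ := a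
  obtain ⟨s, ds, us⟩ := b
  obtain ⟨hdrc, hurc, h2r, h4r⟩ := ha
  obtain ⟨hdsc, husc, h2s, h4s⟩ := hb
  obtain ⟨hrs, h3, h4⟩ := hab
  simp only at *
  set t : ℝ := (r + s) / 2 with ht
  have hrt : r < t := by rw [ht]; linarith
  have hts : t < s := by rw [ht]; linarith
  set N : ℕ := Nat.ceil (2 / (s - r)) with hN
  -- bad sets
  set Q : Set X := ⋃ n ∈ (Finset.Icc 1 N).filter
      (fun m : ℕ => ¬ ∃ k : ℤ, (k:ℝ)/(m:ℝ) ∈ Set.Icc r t), {x | ζ x ∣ n} with hQ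
  set P : Set X := ⋃ n ∈ (Finset.Icc 1 N).filter
      (fun m : ℕ => ¬ ∃ k : ℤ, (k:ℝ)/(m:ℝ) ∈ Set.Icc t s), {x | ζ x ∣ n} with hP
  have hQc : IsClosed Q := by
    apply Set.Finite.isClosed_biUnion (Finset.finite_toSet _)
    intro n _; exact hX.2.2.1 n
  have hPc : IsClosed P := by
    apply Set.Finite.isClosed_biUnion (Finset.finite_toSet _)
    intro n _; exact hX.2.2.1 n
  -- badness implies membership in the finset range
  have hbadN : ∀ n : ℕ, n ≠ 0 → ∀ u v : ℝ, v - u = (s - r)/2 →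
      (¬ ∃ k : ℤ, (k:ℝ)/n ∈ Set.Icc u v) → n ∈ Finset.Icc 1 N := by
    intro n hn u v huv hbad
    refine Finset.mem_Icc.mpr ⟨Nat.one_le_iff_ne_zero.mpr hn, ?_⟩
    by_contra hnN
    push_neg at hnN
    have hn2 : (2 / (s - r) : ℝ) < n := by
      have h1 : (N : ℝ) < n := by exact_mod_cast hnN
      calc (2 / (s-r) : ℝ) ≤ N := Nat.le_ceil _
        _ < n := h1
    have hn0 : (0:ℝ) < n := by exact_mod_cast Nat.pos_of_ne_zero hn
    have hsr : (0:ℝ) < s - r := by linarith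
    have hle : 1 / (n:ℝ) ≤ v - u := by
      rw [huv, div_le_div_iff₀ hn0 (by norm_num : (0:ℝ) < 2)]
      rw [div_lt_iff₀ hsr] at hn2
      nlinarith
    exact hbad (exists_int_div_mem hn hle)
  -- lifting grid points
  have hlift : ∀ d n : ℕ, d ≠ 0 → n ≠ 0 → d ∣ n → ∀ k : ℤ,
      ∃ k' : ℤ, (k':ℝ)/(n:ℝ) = (k:ℝ)/(d:ℝ) := by
    intro d n hd hn hdn k
    refine ⟨k * (n / d : ℕ), ?_⟩
    obtain ⟨m, rfl⟩ := hdn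
    have hm : m ≠ 0 := by rintro rfl; exact hn (mul_zero d)
    rw [Nat.mul_div_cancel_left m (Nat.pos_of_ne_zero hd)]
    have hd' : (d:ℝ) ≠ 0 := Nat.cast_ne_zero.mpr hd
    have hm' : (m:ℝ) ≠ 0 := Nat.cast_ne_zero.mpr hm
    push_cast
    field_simp
  have htr2 : t - r = (s - r)/2 := by rw [ht]; ring
  have hst2 : s - t = (s - r)/2 := by rw [ht]; ring
  -- C' := ur ∩ ds
  have hCQ : ∀ x ∈ ur ∩ ds, x ∉ AC ζ (Set.Icc r t) → x ∈ Q := by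
    intro x hx hnot
    have hz0 : ζ x ≠ 0 := fun h0 => hnot (mem_AC_of_zero ζ h0 hrt.le)
    have hbad : ¬ ∃ k : ℤ, (k:ℝ)/(ζ x : ℝ) ∈ Set.Icc r t := by
      intro ⟨k, hk⟩
      exact hnot ((mem_AC_iff_int ζ hz0).mpr ⟨k, hk.1, hk.2⟩)
    rw [hQ]
    refine Set.mem_biUnion (Finset.mem_filter.mpr ⟨hbadN (ζ x) hz0 r t htr2 hbad, ?_⟩)
      (dvd_refl (ζ x))
    intro ⟨k, hk⟩
    exact hbad ⟨k, hk⟩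
  have hCP : ∀ x ∈ ur ∩ ds, x ∉ AC ζ (Set.Icc t s) → x ∈ P := by
    intro x hx hnot
    have hz0 : ζ x ≠ 0 := fun h0 => hnot (mem_AC_of_zero ζ h0 hts.le)
    have hbad : ¬ ∃ k : ℤ, (k:ℝ)/(ζ x : ℝ) ∈ Set.Icc t s := by
      intro ⟨k, hk⟩
      exact hnot ((mem_AC_iff_int ζ hz0).mpr ⟨k, hk.1, hk.2⟩)
    rw [hP]
    refine Set.mem_biUnion (Finset.mem_filter.mpr ⟨hbadN (ζ x) hz0 t s hst2 hbad, ?_⟩)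
      (dvd_refl (ζ x))
    intro ⟨k, hk⟩
    exact hbad ⟨k, hk⟩
  -- membership in Q forbids grid points in [r,t] for the actual denominator
  have hQbad : ∀ x ∈ Q, ζ x ≠ 0 ∧ ¬ ∃ k : ℤ, (k:ℝ)/(ζ x : ℝ) ∈ Set.Icc r t := by
    intro x hx
    rw [hQ] at hx
    simp only [Set.mem_iUnion, Set.mem_setOf_eq, exists_prop] at hx
    obtain ⟨n, hn, hdvd⟩ := hx
    rw [Finset.mem_filter, Finset.mem_Icc] at hn
    have hn0 : n ≠ 0 := by omega
    have hz0 : ζ x ≠ 0 := by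
      rintro h0; rw [h0] at hdvd; exact hn0 (Nat.eq_zero_of_zero_dvd hdvd)
    refine ⟨hz0, ?_⟩
    rintro ⟨k, hk⟩
    obtain ⟨k', hk'⟩ := hlift (ζ x) n hz0 hn0 hdvd k
    exact hn.2 ⟨k', by rw [hk']; exact hk⟩
  have hPbad : ∀ x ∈ P, ζ x ≠ 0 ∧ ¬ ∃ k : ℤ, (k:ℝ)/(ζ x : ℝ) ∈ Set.Icc t s := by
    intro x hx
    rw [hP] at hx
    simp only [Set.mem_iUnion, Set.mem_setOf_eq, exists_prop] at hx
    obtain ⟨n, hn, hdvd⟩ := hx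
    rw [Finset.mem_filter, Finset.mem_Icc] at hn
    have hn0 : n ≠ 0 := by omega
    have hz0 : ζ x ≠ 0 := by
      rintro h0; rw [h0] at hdvd; exact hn0 (Nat.eq_zero_of_zero_dvd hdvd)
    refine ⟨hz0, ?_⟩
    rintro ⟨k, hk⟩
    obtain ⟨k', hk'⟩ := hlift (ζ x) n hz0 hn0 hdvd k
    exact hn.2 ⟨k', by rw [hk']; exact hk⟩
  have hQAC : ∀ x ∈ (ur ∩ ds) ∩ Q, x ∈ AC ζ (Set.Icc t s) := by
    rintro x ⟨hxC, hxQ⟩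
    obtain ⟨hz0, hbad⟩ := hQbad x hxQ
    obtain ⟨k, hk1, hk2⟩ := (mem_AC_iff_int ζ hz0).mp (h4 hxC)
    refine (mem_AC_iff_int ζ hz0).mpr ⟨k, ?_, hk2⟩
    by_contra hlt
    push_neg at hlt
    exact hbad ⟨k, hk1, hlt.le⟩
  have hPAC : ∀ x ∈ (ur ∩ ds) ∩ P, x ∈ AC ζ (Set.Icc r t) := by
    rintro x ⟨hxC, hxP⟩
    obtain ⟨hz0, hbad⟩ := hPbad x hxP
    obtain ⟨k, hk1, hk2⟩ := (mem_AC_iff_int ζ hz0).mp (h4 hxC)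
    refine (mem_AC_iff_int ζ hz0).mpr ⟨k, hk1, ?_⟩
    by_contra hlt
    push_neg at hlt
    exact hbad ⟨k, hlt.le, hk2⟩
  -- the two enlarged closed sets
  set A' : Set X := dr ∪ ((ur ∩ ds) ∩ P) with hA'
  set B' : Set X := us ∪ ((ur ∩ ds) ∩ Q) with hB'
  have hA'c : IsClosed A' := hdrc.union ((hurc.inter hdsc).inter hPc)
  have hB'c : IsClosed B' := husc.union ((hurc.inter hdsc).inter hQc)
  have hdisj : Disjoint A' B' := by
    rw [Set.disjoint_left]
    rintro x (hx | hx) (hy | hy)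
    · exact absurd (Set.mem_inter hx hy) (by rw [h3]; exact Set.notMem_empty x)
    · -- x ∈ dr and x ∈ C' ∩ Q : den r ∣ ζ x gives grid point r ∈ [r,t]
      obtain ⟨hz0, hbad⟩ := hQbad x hy.2
      have hden : den r ∣ ζ x := by
        have := h4r ⟨hy.1.1, hx⟩
        obtain ⟨l, hl, hld⟩ := this
        rw [Set.Icc_self, Set.mem_singleton_iff] at hl
        rwa [hl] at hld
      obtain ⟨k, hk⟩ := eq_div_of_den_dvd hz0 hden
      exact hbad ⟨k, by rw [← hk]; exact ⟨le_refl r, hrt.le⟩⟩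
    · -- x ∈ C' ∩ P and x ∈ us
      obtain ⟨hz0, hbad⟩ := hPbad x hx.2
      have hden : den s ∣ ζ x := by
        have := h4s ⟨hy, hx.1.2⟩
        obtain ⟨l, hl, hld⟩ := this
        rw [Set.Icc_self, Set.mem_singleton_iff] at hl
        rwa [hl] at hld
      obtain ⟨k, hk⟩ := eq_div_of_den_dvd hz0 hden
      exact hbad ⟨k, by rw [← hk]; exact ⟨hts.le, le_refl s⟩⟩
    · -- x ∈ C' ∩ P and C' ∩ Q
      obtain ⟨hz0, hbadP⟩ := hPbad x hx.2
      obtain ⟨_, hbadQ⟩ := hQbad x hy.2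
      obtain ⟨k, hk1, hk2⟩ := (mem_AC_iff_int ζ hz0).mp (h4 hx.1)
      rcases le_or_gt ((k:ℝ)/(ζ x : ℝ)) t with hc | hc
      · exact hbadQ ⟨k, hk1, hc⟩
      · exact hbadP ⟨k, hc.le, hk2⟩
  obtain ⟨U, V, hUo, hVo, hAU, hBV, hUV, hzUV⟩ := sep_closed_closed hX hA'c hB'c hdisj
  refine ⟨(t, Vᶜ, Uᶜ), rfl, ⟨hVo.isClosed_compl, hUo.isClosed_compl, ?_, ?_⟩, 
    ⟨hrt, ?_, ?_⟩, ⟨hts, ?_, ?_⟩⟩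
  · -- Vᶜ ∪ Uᶜ = univ
    have hVU : V ∩ U = ∅ := by
      rw [Set.inter_comm]; exact Set.disjoint_iff_inter_eq_empty.mp hUV
    rw [← Set.compl_inter, hVU, Set.compl_empty]
  · -- Uᶜ ∩ Vᶜ ⊆ AC [t,t]
    intro x hx
    have : ζ x = 0 := hzUV x (by
      simp only [Set.mem_compl_iff, Set.mem_union, not_or]
      exact ⟨hx.1, hx.2⟩)
    exact mem_AC_of_zero ζ this (le_refl t)
  · -- dr ∩ Uᶜ = ∅
    ext x
    simp only [Set.mem_inter_iff, Set.mem_compl_iff, Set.mem_empty_iff_false, iff_false,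
      not_and, not_not]
    intro hx
    exact hAU (Set.mem_union_left _ hx)
  · -- ur ∩ Vᶜ ⊆ AC [r,t]
    intro x hx
    by_contra hnot
    have hxds : x ∈ ds := by
      have hx2 : x ∈ ds ∪ us := by rw [h2s]; trivial
      rcases hx2 with h | h
      · exact h
      · exact absurd (hBV (Set.mem_union_left _ h)) hx.2
    have := hCQ x ⟨hx.1, hxds⟩ hnot
    exact hx.2 (hBV (Set.mem_union_right _ ⟨⟨hx.1, hxds⟩, this⟩))
  · -- Vᶜ ∩ us = ∅
    ext x
    simp only [Set.mem_inter_iff, Set.mem_compl_iff, Set.mem_empty_iff_false, iff_false,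
      not_and]
    intro hx
    by_contra hus
    exact hx (hBV (Set.mem_union_left _ hus))
  · -- Uᶜ ∩ ds ⊆ AC [t,s]
    intro x hx
    by_contra hnot
    have hxur : x ∈ ur := by
      have hx2 : x ∈ dr ∪ ur := by rw [h2r]; trivial
      rcases hx2 with h | h
      · exact absurd (hAU (Set.mem_union_left _ h)) hx.1
      · exact h
    have := hCP x ⟨hxur, hx.2⟩ hnot
    exact hx.1 (hAU (Set.mem_union_right _ ⟨⟨hxur, hx.2⟩, this⟩))


end Draft

section Node

variable {X : Type*} [TopologicalSpace X] {ζ : X → ℕ}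

open Classical in
noncomputable def mid (hX : ANormal ζ) (a b : Nd X) : Nd X :=
  if h : Vert ζ a ∧ Vert ζ b ∧ Edge ζ a b then (insertion hX h.1 h.2.1 h.2.2).choose else a

lemma mid_spec (hX : ANormal ζ) {a b : Nd X} (ha : Vert ζ a) (hb : Vert ζ b)
    (hab : Edge ζ a b) :
    (mid hX a b).1 = (a.1 + b.1) / 2 ∧ Vert ζ (mid hX a b) ∧ Edge ζ a (mid hX a b) ∧
      Edge ζ (mid hX a b) b := by
  rw [mid, dif_pos ⟨ha, hb, hab⟩]
  exact (insertion hX ha hb hab).choose_spec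

noncomputable def node (hX : ANormal ζ) (a b : Nd X) : ℕ → ℕ → Nd X
  | 0, k => if k = 0 then a else b
  | n+1, k =>
    if k % 2 = 0 then node hX a b n (k / 2)
    else mid hX (node hX a b n (k / 2)) (node hX a b n (k / 2 + 1))

lemma node_inv (hX : ANormal ζ) {a b : Nd X} (ha : Vert ζ a) (hb : Vert ζ b)
    (hab : Edge ζ a b) : ∀ n : ℕ,
    node hX a b n 0 = a ∧ node hX a b n (2 ^ n) = b ∧
    (∀ k, k ≤ 2 ^ n → Vert ζ (node hX a b n k)) ∧
    (∀ k, k ≤ 2 ^ n → (node hX a b n k).1 = a.1 + (b.1 - a.1) * k / 2 ^ n) ∧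
    (∀ k, k < 2 ^ n → Edge ζ (node hX a b n k) (node hX a b n (k + 1))) := by
  intro n
  induction n with
  | zero =>
    refine ⟨by simp [node], by simp [node], ?_, ?_, ?_⟩
    · intro k hk
      interval_cases k
      · simpa [node] using ha
      · simpa [node] using hb
    · intro k hk
      interval_cases k
      · simp [node]
      · simp [node]
    · intro k hk
      interval_cases k
      simpa [node] using hab
  | succ n ih =>
    obtain ⟨ih0, ih1, ihV, ihval, ihE⟩ := ih
    have hevenval : ∀ k, k % 2 = 0 → node hX a b (n+1) k = node hX a b n (k / 2) := by
      intro k hk; rw [node, if_pos hk]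
    have hoddval : ∀ k, k % 2 = 1 → node hX a b (n+1) k =
        mid hX (node hX a b n (k / 2)) (node hX a b n (k / 2 + 1)) := by
      intro k hk; rw [node, if_neg (by omega)]
    have hmid : ∀ m, m < 2 ^ n →
        Vert ζ (mid hX (node hX a b n m) (node hX a b n (m+1))) ∧
        Edge ζ (node hX a b n m) (mid hX (node hX a b n m) (node hX a b n (m+1))) ∧
        Edge ζ (mid hX (node hX a b n m) (node hX a b n (m+1))) (node hX a b n (m+1)) ∧
        (mid hX (node hX a b n m) (node hX a b n (m+1))).1 =
          ((node hX a b n m).1 + (node hX a b n (m+1)).1) / 2 := by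
      intro m hm
      obtain ⟨h1, h2, h3, h4⟩ := mid_spec hX (ihV m hm.le) (ihV (m+1) hm) (ihE m hm)
      exact ⟨h2, h3, h4, h1⟩
    have hp : (2:ℕ) ^ (n+1) = 2 * 2 ^ n := by ring
    refine ⟨?_, ?_, ?_, ?_, ?_⟩
    · rw [hevenval 0 (by omega)]; simpa using ih0
    · rw [hevenval _ (by omega : 2^(n+1) % 2 = 0)]
      have : 2 ^ (n+1) / 2 = 2 ^ n := by omega
      rw [this]; exact ih1
    · intro k hk
      rcases Nat.even_or_odd k with he | ho
      · rw [hevenval k (Nat.even_iff.mp he)]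
        exact ihV _ (by omega)
      · have hk1 : k % 2 = 1 := Nat.odd_iff.mp ho
        rw [hoddval k hk1]
        exact (hmid (k/2) (by omega)).1
    · intro k hk
      have h2n : ((2:ℝ) ^ (n+1)) = 2 * 2 ^ n := by ring
      have h2z : ((2:ℝ)) ^ n ≠ 0 := by positivity
      rcases Nat.even_or_odd k with he | ho
      · have hk2 : k % 2 = 0 := Nat.even_iff.mp he
        obtain ⟨m, rfl⟩ : ∃ m, k = 2 * m := ⟨k/2, by omega⟩
        rw [hevenval _ (by omega), show 2*m/2 = m by omega, ihval m (by omega)]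
        push_cast
        rw [pow_succ]
        field_simp
      · have hk1 : k % 2 = 1 := Nat.odd_iff.mp ho
        obtain ⟨m, rfl⟩ : ∃ m, k = 2 * m + 1 := ⟨k/2, by omega⟩
        rw [hoddval _ (by omega), show (2*m+1)/2 = m by omega,
          (hmid m (by omega)).2.2.2,
          ihval _ (by omega : m ≤ 2^n), ihval _ (by omega : m + 1 ≤ 2^n)]
        push_cast
        rw [pow_succ]
        field_simp
        ring
    · intro k hk
      rcases Nat.even_or_odd k with he | ho
      · have hk2 : k % 2 = 0 := Nat.even_iff.mp he
        have hk12 : (k+1) % 2 = 1 := by omega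
        rw [hevenval k hk2, hoddval (k+1) hk12]
        have : (k+1)/2 = k/2 := by omega
        rw [this]
        exact (hmid (k/2) (by omega)).2.1
      · have hk1 : k % 2 = 1 := Nat.odd_iff.mp ho
        have hk12 : (k+1) % 2 = 0 := by omega
        rw [hoddval k hk1, hevenval (k+1) hk12]
        have : (k+1)/2 = k/2 + 1 := by omega
        rw [this]
        exact (hmid (k/2) (by omega)).2.2.1

lemma node_chain (hX : ANormal ζ) {a b : Nd X} (ha : Vert ζ a) (hb : Vert ζ b)
    (hab : Edge ζ a b) (n : ℕ) :
    ∀ k' k, k < k' → k' ≤ 2 ^ n → Edge ζ (node hX a b n k) (node hX a b n k') := by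
  obtain ⟨_, _, hV, _, hE⟩ := node_inv hX ha hb hab n
  intro k'
  induction k' with
  | zero => omega
  | succ j ih =>
    intro k hk hle
    rcases Nat.lt_succ_iff_lt_or_eq.mp hk with h | h
    · exact edge_trans (ih k h (by omega)) (hV j (by omega)) (hE j (by omega))
    · subst h; exact hE k (by omega)

lemma node_lift (hX : ANormal ζ) (a b : Nd X) (n m k : ℕ) :
    node hX a b (n + m) (k * 2 ^ m) = node hX a b n k := by
  induction m with
  | zero => simp only [Nat.add_zero, pow_zero, mul_one]
  | succ m ih =>
    have h1 : k * 2 ^ (m+1) = (k * 2 ^ m) * 2 := by ring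
    have : node hX a b (n + (m+1)) (k * 2 ^ (m+1)) = node hX a b (n + m) (k * 2 ^ m) := by
      rw [show n + (m+1) = (n + m) + 1 by ring, node, h1, if_pos (by omega)]
      congr 1
      omega
    rw [this, ih]

end Node

section DenseFamily

variable {X : Type*} [TopologicalSpace X] {ζ : X → ℕ}

lemma dense_family {ι : Type*} (c : ι → Nd X) (α β : ℝ)
    (hvert : ∀ i, Vert ζ (c i))
    (hedge : ∀ i j, (c i).1 < (c j).1 → Edge ζ (c i) (c j))
    (hinj : ∀ i j, (c i).1 = (c j).1 → c i = c j)
    (hrange : ∀ i, (c i).1 ∈ Set.Icc α β)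
    (hα : ∃ i, (c i).1 = α ∧ (c i).2.2 = Set.univ)
    (hβ : ∃ i, (c i).1 = β ∧ (c i).2.1 = Set.univ)
    (hdense : ∀ u v : ℝ, α ≤ u → v ≤ β → u < v → ∃ i, (c i).1 ∈ Set.Ioo u v) :
    ∃ f : X → ℝ, Continuous f ∧ (∀ x, f x ∈ Set.Icc α β) ∧
      (∀ i, (∀ x ∈ (c i).2.1, f x ≤ (c i).1) ∧ (∀ x ∈ (c i).2.2, (c i).1 ≤ f x)) ∧
      (∀ x, den (f x) ∣ ζ x) := by
  classical
  obtain ⟨iα, hiα1, hiα2⟩ := hα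
  obtain ⟨iβ, hiβ1, hiβ2⟩ := hβ
  set S : X → Set ℝ := fun x => {t | ∃ i, (c i).1 = t ∧ x ∈ (c i).2.2} with hS
  have hSne : ∀ x, (S x).Nonempty := by
    intro x; exact ⟨α, iα, hiα1, by rw [hiα2]; trivial⟩
  have hSbdd : ∀ x, BddAbove (S x) := by
    intro x
    exact ⟨β, by rintro t ⟨i, rfl, _⟩; exact (hrange i).2⟩
  set f : X → ℝ := fun x => sSup (S x) with hf
  have hD2 : ∀ (i) (x : X), x ∈ (c i).2.1 ∨ x ∈ (c i).2.2 := by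
    intro i x
    have := (hvert i).2.2.1
    have hx : x ∈ (c i).2.1 ∪ (c i).2.2 := by rw [this]; trivial
    exact hx
  have hup : ∀ (i) (x : X), x ∈ (c i).2.2 → (c i).1 ≤ f x := by
    intro i x hx
    exact le_csSup (hSbdd x) ⟨i, rfl, hx⟩
  have hdown : ∀ (i) (x : X), x ∈ (c i).2.1 → f x ≤ (c i).1 := by
    intro i x hx
    apply csSup_le (hSne x)
    rintro t ⟨j, rfl, hj⟩
    by_contra hlt
    push_neg at hlt
    have := (hedge i j hlt).2.1
    exact absurd (Set.mem_inter hx hj) (by rw [this]; exact Set.notMem_empty x)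
  have hmem : ∀ x, f x ∈ Set.Icc α β := by
    intro x
    constructor
    · exact le_csSup (hSbdd x) ⟨iα, hiα1, by rw [hiα2]; trivial⟩
    · exact csSup_le (hSne x) (by rintro t ⟨i, rfl, _⟩; exact (hrange i).2)
  have hnotup : ∀ (i) (x : X), f x < (c i).1 → x ∈ (c i).2.1 := by
    intro i x hlt
    rcases hD2 i x with h | h
    · exact h
    · exact absurd (hup i x h) (by linarith)
  have hnotdown : ∀ (i) (x : X), (c i).1 < f x → x ∈ (c i).2.2 := by
    intro i x hlt
    rcases hD2 i x with h | h
    · exact absurd (hdown i x h) (by linarith)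
    · exact h
  have hαβ : α ≤ β := le_trans (hrange iα).1 (hrange iα).2
  -- approximation from above
  have hdowncl : ∀ (x : X), ∀ ε > (0:ℝ), ∃ i, x ∈ (c i).2.1 ∧ (c i).1 < f x + ε ∧
      f x ≤ (c i).1 := by
    intro x ε hε
    rcases eq_or_lt_of_le (hmem x).2 with hb | hb
    · refine ⟨iβ, by rw [hiβ2]; trivial, by rw [hiβ1, ← hb]; linarith, by rw [hiβ1, ← hb]⟩
    · obtain ⟨i, hi⟩ := hdense (f x) (min (f x + ε) β) (hmem x).1 (min_le_right _ _)
        (lt_min (by linarith) hb)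
      have h1 : f x < (c i).1 := hi.1
      have h2 : (c i).1 < f x + ε := lt_of_lt_of_le hi.2 (min_le_left _ _)
      have hxd : x ∈ (c i).2.1 := by
        rcases hD2 i x with h | h
        · exact h
        · exact absurd (hup i x h) (by linarith)
      exact ⟨i, hxd, h2, h1.le⟩
  have hupcl : ∀ (x : X), ∀ ε > (0:ℝ), ∃ i, x ∈ (c i).2.2 ∧ f x - ε < (c i).1 ∧
      (c i).1 ≤ f x := by
    intro x ε hε
    obtain ⟨t, ⟨i, rfl, hxi⟩, hlt⟩ := exists_lt_of_lt_csSup (hSne x)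
      (by linarith : f x - ε < f x)
    exact ⟨i, hxi, hlt, hup i x hxi⟩
  refine ⟨f, ?_, hmem, fun i => ⟨fun x hx => hdown i x hx, fun x hx => hup i x hx⟩, ?_⟩
  · -- continuity
    rw [continuous_iff_continuousAt]
    intro x
    rw [ContinuousAt, Metric.tendsto_nhds]
    intro ε hε
    -- upper neighbourhood
    have hupper : ∃ N : Set X, IsOpen N ∧ x ∈ N ∧ ∀ y ∈ N, f y < f x + ε := by
      rcases lt_or_ge β (f x + ε) with hb | hb
      · exact ⟨Set.univ, isOpen_univ, trivial, fun y _ => lt_of_le_of_lt (hmem y).2 hb⟩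
      · obtain ⟨i, hi⟩ := hdense (f x) (f x + ε) (hmem x).1 hb (by linarith)
        refine ⟨((c i).2.2)ᶜ, (hvert i).2.1.isOpen_compl, ?_, ?_⟩
        · intro hc
          exact absurd (hup i x hc) (by linarith [hi.1])
        · intro y hy
          have : y ∈ (c i).2.1 := by
            rcases hD2 i y with h | h
            · exact h
            · exact absurd h hy
          exact lt_of_le_of_lt (hdown i y this) hi.2
    have hlower : ∃ N : Set X, IsOpen N ∧ x ∈ N ∧ ∀ y ∈ N, f x - ε < f y := by
      rcases lt_or_ge (f x - ε) α with hb | hb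
      · exact ⟨Set.univ, isOpen_univ, trivial, fun y _ => lt_of_lt_of_le hb (hmem y).1⟩
      · obtain ⟨i, hi⟩ := hdense (f x - ε) (f x) hb (hmem x).2 (by linarith)
        refine ⟨((c i).2.1)ᶜ, (hvert i).1.isOpen_compl, ?_, ?_⟩
        · intro hc
          exact absurd (hdown i x hc) (by linarith [hi.2])
        · intro y hy
          have : y ∈ (c i).2.2 := by
            rcases hD2 i y with h | h
            · exact absurd h hy
            · exact h
          exact lt_of_lt_of_le hi.1 (hup i y this)
    obtain ⟨N1, hN1o, hxN1, hN1⟩ := hupper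
    obtain ⟨N2, hN2o, hxN2, hN2⟩ := hlower
    filter_upwards [(hN1o.inter hN2o).mem_nhds ⟨hxN1, hxN2⟩] with y hy
    rw [Real.dist_eq, abs_sub_lt_iff]
    constructor
    · linarith [hN1 y hy.1]
    · linarith [hN2 y hy.2]
  · -- denominators
    intro x
    rcases Nat.eq_zero_or_pos (ζ x) with hz | hz
    · rw [hz]; exact dvd_zero _
    have hz0 : ζ x ≠ 0 := Nat.pos_iff_ne_zero.mp hz
    have hn0 : (0:ℝ) < (ζ x : ℝ) := by exact_mod_cast hz
    have happrox : ∀ ε > (0:ℝ), ∃ k : ℤ, |(k:ℝ)/(ζ x : ℝ) - f x| ≤ ε := by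
      intro ε hε
      obtain ⟨i, hxi, hi1, hi2⟩ := hupcl x ε hε
      obtain ⟨j, hxj, hj1, hj2⟩ := hdowncl x ε hε
      rcases eq_or_lt_of_le (le_trans hi2 hj2) with heq | hlt
      · have hcc : c i = c j := hinj i j heq
        have hx2 : x ∈ (c i).2.2 ∩ (c i).2.1 := ⟨hxi, by rw [hcc]; exact hxj⟩
        obtain ⟨k, hk1, hk2⟩ := (mem_AC_iff_int ζ hz0).mp ((hvert i).2.2.2 hx2)
        refine ⟨k, abs_sub_le_iff.mpr ⟨by linarith, by linarith⟩⟩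
      · have hE := hedge i j hlt
        obtain ⟨k, hk1, hk2⟩ := (mem_AC_iff_int ζ hz0).mp (hE.2.2 ⟨hxi, hxj⟩)
        refine ⟨k, abs_sub_le_iff.mpr ⟨by linarith, by linarith⟩⟩
    have hcl : ((ζ x : ℝ) * f x) ∈ Set.range ((↑) : ℤ → ℝ) := by
      have hclosed : IsClosed (Set.range ((↑) : ℤ → ℝ)) :=
        Int.isClosedEmbedding_coe_real.isClosed_range
      rw [← hclosed.closure_eq]
      rw [Real.mem_closure_iff]
      intro ε hε
      obtain ⟨k, hk⟩ := happrox (ε / (2 * (ζ x : ℝ))) (by positivity)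
      refine ⟨(k : ℝ), ⟨k, rfl⟩, ?_⟩
      have : |(k:ℝ) - (ζ x : ℝ) * f x| = (ζ x : ℝ) * |(k:ℝ)/(ζ x : ℝ) - f x| := by
        rw [← abs_of_pos hn0, ← abs_mul]
        congr 1
        field_simp
        rw [abs_of_pos hn0]; ring
      rw [this]
      calc (ζ x : ℝ) * |(k:ℝ)/(ζ x : ℝ) - f x| ≤ (ζ x : ℝ) * (ε / (2 * (ζ x : ℝ))) := by
            exact mul_le_mul_of_nonneg_left hk hn0.le
        _ = ε / 2 := by field_simp
        _ < ε := by linarith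
    obtain ⟨k, hk⟩ := hcl
    have : f x = (k : ℝ) / (ζ x : ℝ) := by
      field_simp at hk ⊢
      linarith [hk]
    rw [this]
    exact den_div_int k (ζ x) hz0
end DenseFamily

def GapOf (D : Set ℝ) : Type :=
  {g : ℝ × ℝ // g.1 ∈ D ∧ g.2 ∈ D ∧ g.1 < g.2 ∧ Set.Ioo g.1 g.2 ∩ D = ∅}



set_option maxHeartbeats 1600000 in
/-- Any draft on a closed subset `D ⊆ ℝ` of an a-normal space admits a
continuous, denominator-decreasing realisation. -/
theorem draft_closed_has_realisation
    {X : Type*} [TopologicalSpace X] (ζ : X → ℕ) (hX : ANormal ζ)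
    (α β : ℝ) (hαβ : α ≤ β) (D : Set ℝ) (down up : ℝ → Set X)
    (h : IsDraft ζ α β D down up) (hDclosed : IsClosed D) :
    ∃ f : X → ℝ, IsRealisation α β D down up f ∧ Continuous f ∧
      ∀ x : X, den (f x) ∣ ζ x := by
  classical
  obtain ⟨hDsub, hαD, hβD, hdc, huc, hupα, hdownβ, hD2, hD3, hD4⟩ := h
  set nd : ℝ → Nd X := fun r => (r, down r, up r) with hnd
  have hvertD : ∀ r ∈ D, Vert ζ (nd r) := fun r hr =>
    ⟨hdc r hr, huc r hr, hD2 r hr, hD4 r hr r hr (le_refl r)⟩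
  have hedgeD : ∀ r ∈ D, ∀ s ∈ D, r < s → Edge ζ (nd r) (nd s) := fun r hr s hs hrs =>
    ⟨hrs, hD3 r hr s hs hrs, hD4 r hr s hs hrs.le⟩
  set nodeg : GapOf D → ℕ → ℕ → Nd X :=
    fun g n k => node hX (nd g.1.1) (nd g.1.2) n k with hnodeg
  have hginv : ∀ g : GapOf D,
      (∀ n : ℕ, nodeg g n 0 = nd g.1.1 ∧ nodeg g n (2 ^ n) = nd g.1.2 ∧
      (∀ k, k ≤ 2 ^ n → Vert ζ (nodeg g n k)) ∧
      (∀ k, k ≤ 2 ^ n → (nodeg g n k).1 =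
        g.1.1 + (g.1.2 - g.1.1) * k / 2 ^ n) ∧
      (∀ k, k < 2 ^ n → Edge ζ (nodeg g n k) (nodeg g n (k + 1)))) := by
    intro g
    exact node_inv hX (hvertD _ g.2.1) (hvertD _ g.2.2.1) (hedgeD _ g.2.1 _ g.2.2.1 g.2.2.2.1)
  have hgchain : ∀ (g : GapOf D) n k k', k < k' → k' ≤ 2 ^ n →
      Edge ζ (nodeg g n k) (nodeg g n k') := by
    intro g n k k' hkk' hk'
    exact node_chain hX (hvertD _ g.2.1) (hvertD _ g.2.2.1)
      (hedgeD _ g.2.1 _ g.2.2.1 g.2.2.2.1) n k' k hkk' hk'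
  have hIoo : ∀ (g : GapOf D) n k, 0 < k → k < 2 ^ n →
      (nodeg g n k).1 ∈ Set.Ioo g.1.1 g.1.2 := by
    intro g n k hk0 hkn
    have hval := (hginv g n).2.2.2.1 k hkn.le
    rw [hval]
    have hpq : (0:ℝ) < g.1.2 - g.1.1 := sub_pos.mpr g.2.2.2.1
    have h2 : (0:ℝ) < 2 ^ n := by positivity
    have hk0' : (0:ℝ) < k := by exact_mod_cast hk0
    have hkn' : (k:ℝ) < 2 ^ n := by exact_mod_cast hkn
    constructor
    · have : 0 < (g.1.2 - g.1.1) * k / 2 ^ n := by positivity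
      linarith
    · have hlt : (g.1.2 - g.1.1) * k / 2 ^ n < g.1.2 - g.1.1 := by
        rw [div_lt_iff₀ h2]
        nlinarith
      linarith
  -- Edge from a D-point to a node and vice versa
  have hDn : ∀ (g : GapOf D) n k, 0 < k → k < 2 ^ n → ∀ r ∈ D,
      (r ≤ g.1.1 → Edge ζ (nd r) (nodeg g n k)) ∧
      (g.1.2 ≤ r → Edge ζ (nodeg g n k) (nd r)) := by
    intro g n k hk0 hkn r hr
    constructor
    · intro hrp
      have hedge0 : Edge ζ (nd g.1.1) (nodeg g n k) := by
        rw [← (hginv g n).1]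
        exact hgchain g n 0 k hk0 hkn.le
      rcases eq_or_lt_of_le hrp with he | hl
      · rwa [he]
      · exact edge_trans (hedgeD r hr _ g.2.1 hl) (hvertD _ g.2.1) hedge0
    · intro hqr
      have hedge1 : Edge ζ (nodeg g n k) (nd g.1.2) := by
        rw [← (hginv g n).2.1]
        exact hgchain g n k (2 ^ n) hkn le_rfl
      rcases eq_or_lt_of_le hqr with he | hl
      · rwa [← he]
      · exact edge_trans hedge1 (hvertD _ g.2.2.1) (hedgeD _ g.2.2.1 r hr hl)
  -- same gap, two levels
  have hsame : ∀ (g : GapOf D) n k n' k', k ≤ 2 ^ n → k' ≤ 2 ^ n' →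
      ((nodeg g n k).1 < (nodeg g n' k').1 → Edge ζ (nodeg g n k) (nodeg g n' k')) ∧
      ((nodeg g n k).1 = (nodeg g n' k').1 → nodeg g n k = nodeg g n' k') := by
    intro g n k n' k' hkn hkn'
    have e1 : nodeg g (n + n') (k * 2 ^ n') = nodeg g n k := node_lift hX _ _ n n' k
    have e2 : nodeg g (n + n') (k' * 2 ^ n) = nodeg g n' k' := by
      rw [show n + n' = n' + n by ring]
      exact node_lift hX _ _ n' n k'
    have hK : k * 2 ^ n' ≤ 2 ^ (n + n') := by
      rw [pow_add]
      exact Nat.mul_le_mul_right _ hkn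
    have hK' : k' * 2 ^ n ≤ 2 ^ (n + n') := by
      rw [show n + n' = n' + n by ring, pow_add]
      exact Nat.mul_le_mul_right _ hkn'
    have hv := (hginv g (n + n')).2.2.2.1 _ hK
    have hv' := (hginv g (n + n')).2.2.2.1 _ hK'
    have hpq : (0:ℝ) < g.1.2 - g.1.1 := sub_pos.mpr g.2.2.2.1
    have h2 : (0:ℝ) < (2:ℝ) ^ (n + n') := by positivity
    constructor
    · intro hlt
      rw [← e1, ← e2] at hlt ⊢
      rw [hv, hv'] at hlt
      apply hgchain g (n + n') _ _ ?_ hK'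
      have hcast : ((k * 2 ^ n' : ℕ) : ℝ) < ((k' * 2 ^ n : ℕ) : ℝ) := by
        by_contra hab
        push_neg at hab
        have hmono : (g.1.2 - g.1.1) * ((k' * 2 ^ n : ℕ) : ℝ) / 2 ^ (n + n') ≤
            (g.1.2 - g.1.1) * ((k * 2 ^ n' : ℕ) : ℝ) / 2 ^ (n + n') := by
          gcongr
        linarith
      exact_mod_cast hcast
    · intro heq
      rw [← e1, ← e2] at heq ⊢
      rw [hv, hv'] at heq
      have hdiv : (g.1.2 - g.1.1) * ((k * 2 ^ n' : ℕ) : ℝ) / 2 ^ (n + n') =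
          (g.1.2 - g.1.1) * ((k' * 2 ^ n : ℕ) : ℝ) / 2 ^ (n + n') := by linarith
      have hmul : (g.1.2 - g.1.1) * ((k * 2 ^ n' : ℕ) : ℝ) =
          (g.1.2 - g.1.1) * ((k' * 2 ^ n : ℕ) : ℝ) := by
        have := congrArg (fun y => y * (2:ℝ) ^ (n + n')) hdiv
        simpa [div_mul_cancel₀, ne_of_gt h2] using this
      have hcast : ((k * 2 ^ n' : ℕ) : ℝ) = ((k' * 2 ^ n : ℕ) : ℝ) :=
        mul_left_cancel₀ (ne_of_gt hpq) hmul
      have : k * 2 ^ n' = k' * 2 ^ n := by exact_mod_cast hcast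
      rw [this]
  have hgapuniq : ∀ g g' : GapOf D,
      (Set.Ioo g.1.1 g.1.2 ∩ Set.Ioo g'.1.1 g'.1.2).Nonempty → g = g' := by
    rintro g g' ⟨x, hx1, hx2⟩
    have hcontra : ∀ (a b : GapOf D) (y : ℝ), y ∈ Set.Ioo a.1.1 a.1.2 → y ∈ D → False := by
      intro a b y hy hyD
      have : y ∈ Set.Ioo a.1.1 a.1.2 ∩ D := ⟨hy, hyD⟩
      rw [a.2.2.2.2] at this
      exact this
    have h1 : g.1.1 = g'.1.1 := by
      by_contra hne
      rcases lt_or_gt_of_ne hne with hl | hl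
      · exact hcontra g g' g'.1.1 ⟨hl, lt_trans hx2.1 hx1.2⟩ g'.2.1
      · exact hcontra g' g g.1.1 ⟨hl, lt_trans hx1.1 hx2.2⟩ g.2.1
    have h2 : g.1.2 = g'.1.2 := by
      by_contra hne
      rcases lt_or_gt_of_ne hne with hl | hl
      · exact hcontra g' g g.1.2 ⟨lt_trans hx2.1 hx1.2, hl⟩ g.2.2.1
      · exact hcontra g g' g'.1.2 ⟨lt_trans hx1.1 hx2.2, hl⟩ g'.2.2.1
    exact Subtype.ext (Prod.ext h1 h2)
  -- the index family
  set c : (↥D ⊕ (GapOf D × ℕ × ℕ)) → Nd X := Sum.elim (fun r => nd r.1)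
    (fun z => if 0 < z.2.2 ∧ z.2.2 < 2 ^ z.2.1 then nodeg z.1 z.2.1 z.2.2 else nd α)
    with hc
  have hdesc : ∀ i, (∃ r, r ∈ D ∧ c i = nd r) ∨
      (∃ (g : GapOf D) (n k : ℕ), 0 < k ∧ k < 2 ^ n ∧ c i = nodeg g n k) := by
    rintro (r | z)
    · exact Or.inl ⟨r.1, r.2, rfl⟩
    · by_cases hz : 0 < z.2.2 ∧ z.2.2 < 2 ^ z.2.1
      · exact Or.inr ⟨z.1, z.2.1, z.2.2, hz.1, hz.2, by simp [hc, hz]⟩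
      · exact Or.inl ⟨α, hαD, by simp [hc, hz]⟩
  have hvert2 : ∀ i, Vert ζ (c i) := by
    intro i
    rcases hdesc i with ⟨r, hr, hcr⟩ | ⟨g, n, k, h1, h2, hcr⟩
    · rw [hcr]; exact hvertD r hr
    · rw [hcr]; exact (hginv g n).2.2.1 k h2.le
  have hndval : ∀ r : ℝ, (nd r).1 = r := fun r => rfl
  have hedge2 : ∀ i j, (c i).1 < (c j).1 → Edge ζ (c i) (c j) := by
    intro i j hij
    rcases hdesc i with ⟨r, hr, hci⟩ | ⟨g, n, k, hk0, hkn, hci⟩ <;>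
      rcases hdesc j with ⟨r', hr', hcj⟩ | ⟨g', n', k', hk0', hkn', hcj⟩ <;>
      rw [hci, hcj] at hij ⊢
    · exact hedgeD r hr r' hr' hij
    · have hv' := hIoo g' n' k' hk0' hkn'
      have hrle : r ≤ g'.1.1 := by
        by_contra hgt
        push_neg at hgt
        have : r ∈ Set.Ioo g'.1.1 g'.1.2 ∩ D := ⟨⟨hgt, lt_trans hij hv'.2⟩, hr⟩
        rw [g'.2.2.2.2] at this
        exact this
      exact (hDn g' n' k' hk0' hkn' r hr).1 hrle
    · have hv := hIoo g n k hk0 hkn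
      have hrle : g.1.2 ≤ r' := by
        by_contra hgt
        push_neg at hgt
        have : r' ∈ Set.Ioo g.1.1 g.1.2 ∩ D := ⟨⟨lt_trans hv.1 hij, hgt⟩, hr'⟩
        rw [g.2.2.2.2] at this
        exact this
      exact (hDn g n k hk0 hkn r' hr').2 hrle
    · by_cases hgg : g = g'
      · subst hgg
        exact (hsame g n k n' k' hkn.le hkn'.le).1 hij
      · have hv := hIoo g n k hk0 hkn
        have hv' := hIoo g' n' k' hk0' hkn'
        have horder : g.1.2 ≤ g'.1.1 := by
          by_contra hlt
          push_neg at hlt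
          have hmax : max g.1.1 g'.1.1 < min g.1.2 g'.1.2 := by
            rw [max_lt_iff]
            constructor
            · rw [lt_min_iff]
              exact ⟨g.2.2.2.1, lt_trans (lt_trans hv.1 hij) hv'.2⟩
            · rw [lt_min_iff]
              exact ⟨hlt, g'.2.2.2.1⟩
          set m := (max g.1.1 g'.1.1 + min g.1.2 g'.1.2) / 2 with hm
          have hm1 : max g.1.1 g'.1.1 < m := by rw [hm]; linarith
          have hm2 : m < min g.1.2 g'.1.2 := by rw [hm]; linarith
          refine hgg (hgapuniq g g' ⟨m, ?_, ?_⟩)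
          · exact ⟨lt_of_le_of_lt (le_max_left _ _) hm1,
              lt_of_lt_of_le hm2 (min_le_left _ _)⟩
          · exact ⟨lt_of_le_of_lt (le_max_right _ _) hm1,
              lt_of_lt_of_le hm2 (min_le_right _ _)⟩
        exact edge_trans ((hDn g n k hk0 hkn _ g.2.2.1).2 le_rfl) (hvertD _ g.2.2.1)
          ((hDn g' n' k' hk0' hkn' _ g.2.2.1).1 horder)
  have hinj2 : ∀ i j, (c i).1 = (c j).1 → c i = c j := by
    intro i j hij
    rcases hdesc i with ⟨r, hr, hci⟩ | ⟨g, n, k, hk0, hkn, hci⟩ <;>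
      rcases hdesc j with ⟨r', hr', hcj⟩ | ⟨g', n', k', hk0', hkn', hcj⟩ <;>
      rw [hci, hcj] at hij ⊢
    · exact congrArg nd (show r = r' from hij)
    · have hv' := hIoo g' n' k' hk0' hkn'
      have heq : r = (nodeg g' n' k').1 := hij
      rw [← heq] at hv'
      have : r ∈ Set.Ioo g'.1.1 g'.1.2 ∩ D := ⟨hv', hr⟩
      rw [g'.2.2.2.2] at this
      exact this.elim
    · have hv := hIoo g n k hk0 hkn
      have heq : (nodeg g n k).1 = r' := hij
      rw [heq] at hv
      have : r' ∈ Set.Ioo g.1.1 g.1.2 ∩ D := ⟨hv, hr'⟩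
      rw [g.2.2.2.2] at this
      exact this.elim
    · have hgg : g = g' := by
        apply hgapuniq g g'
        refine ⟨(nodeg g n k).1, hIoo g n k hk0 hkn, ?_⟩
        rw [hij]
        exact hIoo g' n' k' hk0' hkn'
      subst hgg
      exact (hsame g n k n' k' hkn.le hkn'.le).2 hij
  have hrange2 : ∀ i, (c i).1 ∈ Set.Icc α β := by
    intro i
    rcases hdesc i with ⟨r, hr, hcr⟩ | ⟨g, n, k, h1, h2, hcr⟩
    · rw [hcr]; exact hDsub hr
    · rw [hcr]
      have := hIoo g n k h1 h2
      have hp := hDsub g.2.1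
      have hq := hDsub g.2.2.1
      exact ⟨le_trans hp.1 this.1.le, le_trans this.2.le hq.2⟩
  have hdense2 : ∀ u v : ℝ, α ≤ u → v ≤ β → u < v → ∃ i, (c i).1 ∈ Set.Ioo u v := by
    intro u v hu hv huv
    by_cases hDi : (D ∩ Set.Ioo u v).Nonempty
    · obtain ⟨r, hrD, hrIoo⟩ := hDi
      exact ⟨Sum.inl ⟨r, hrD⟩, hrIoo⟩
    · have hDempty : ∀ d ∈ D, d ∉ Set.Ioo u v := by
        intro d hd hdIoo
        exact hDi ⟨d, hd, hdIoo⟩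
      set x : ℝ := (u + v) / 2 with hx
      have hux : u < x := by rw [hx]; linarith
      have hxv : x < v := by rw [hx]; linarith
      set p := sSup (D ∩ Set.Iic x) with hp
      have hpmem : p ∈ D ∩ Set.Iic x := by
        apply IsClosed.csSup_mem (hDclosed.inter isClosed_Iic)
        · exact ⟨α, hαD, show α ≤ x by linarith⟩
        · exact ⟨x, fun y hy => hy.2⟩
      have hpu : p ≤ u := by
        by_contra hgt
        push_neg at hgt
        exact hDempty p hpmem.1 ⟨hgt, lt_of_le_of_lt hpmem.2 hxv⟩
      set q := sInf (D ∩ Set.Ici x) with hq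
      have hqmem : q ∈ D ∩ Set.Ici x := by
        apply IsClosed.csInf_mem (hDclosed.inter isClosed_Ici)
        · exact ⟨β, hβD, show x ≤ β by linarith⟩
        · exact ⟨x, fun y hy => hy.2⟩
      have hvq : v ≤ q := by
        by_contra hgt
        push_neg at hgt
        exact hDempty q hqmem.1 ⟨lt_of_lt_of_le hux hqmem.2, hgt⟩
      have hpq : p < q := by linarith
      have hgapempty : Set.Ioo p q ∩ D = ∅ := by
        ext d
        simp only [Set.mem_inter_iff, Set.mem_Ioo, Set.mem_empty_iff_false, iff_false,
          not_and, and_imp]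
        intro hd1 hd2 hdD
        rcases le_total d x with hdx | hdx
        · have : d ≤ p := le_csSup ⟨x, fun y hy => hy.2⟩ ⟨hdD, hdx⟩
          linarith
        · have : q ≤ d := csInf_le ⟨x, fun y hy => hy.2⟩ ⟨hdD, hdx⟩
          linarith
      set g : GapOf D := ⟨(p, q), hpmem.1, hqmem.1, hpq, hgapempty⟩ with hg
      obtain ⟨n, hn⟩ := pow_unbounded_of_one_lt ((q - p)/(v - u)) (by norm_num : (1:ℝ) < 2)
      have hL : (0:ℝ) < q - p := by linarith
      have hvu : (0:ℝ) < v - u := by linarith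
      have h2n : (0:ℝ) < (2:ℝ) ^ n := by positivity
      have hqp' : q - p < (v - u) * 2 ^ n := by
        rw [div_lt_iff₀ hvu] at hn
        nlinarith
      set lo := (u - p) * 2 ^ n / (q - p) with hlo
      set hi := (v - p) * 2 ^ n / (q - p) with hhi
      have hlo0 : 0 ≤ lo := by
        apply div_nonneg _ hL.le
        have : (0:ℝ) ≤ u - p := by linarith
        positivity
      have hdiff : 1 < hi - lo := by
        rw [hhi, hlo, div_sub_div_same]
        rw [lt_div_iff₀ hL]
        nlinarith
      set k : ℕ := (⌊lo⌋ + 1).toNat with hk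
      have hfl0 : 0 ≤ ⌊lo⌋ := Int.floor_nonneg.mpr hlo0
      have hkval : (k : ℝ) = (⌊lo⌋ : ℝ) + 1 := by
        rw [hk]
        have : ((⌊lo⌋ + 1).toNat : ℤ) = ⌊lo⌋ + 1 := Int.toNat_of_nonneg (by omega)
        exact_mod_cast congrArg (fun z : ℤ => (z : ℝ)) this
      have hklo : lo < (k : ℝ) := by
        rw [hkval]
        exact Int.lt_floor_add_one lo
      have hkhi : (k : ℝ) < hi := by
        rw [hkval]
        have := Int.floor_le lo
        linarith
      have hk0 : 0 < k := by
        have : (0:ℝ) < (k:ℝ) := lt_of_le_of_lt hlo0 hklo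
        exact_mod_cast this
      have hk2n : k < 2 ^ n := by
        have h1 : hi ≤ (2:ℝ) ^ n := by
          rw [hhi, div_le_iff₀ hL]
          nlinarith
        have h2 : (k : ℝ) < (2:ℝ) ^ n := lt_of_lt_of_le hkhi h1
        have h3 : (k : ℝ) < ((2 ^ n : ℕ) : ℝ) := by push_cast; exact h2
        exact_mod_cast h3
      refine ⟨Sum.inr (g, n, k), ?_⟩
      have hcval : c (Sum.inr (g, n, k)) = nodeg g n k := by
        rw [hc]
        simp only [Sum.elim_inr]
        rw [if_pos ⟨hk0, hk2n⟩]
      rw [hcval, (hginv g n).2.2.2.1 k hk2n.le]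
      have hg1 : g.1.1 = p := rfl
      have hg2 : g.1.2 = q := rfl
      rw [hg1, hg2]
      constructor
      · rw [hlo, div_lt_iff₀ hL] at hklo
        have h5 : u - p < (q - p) * k / 2 ^ n := by
          rw [lt_div_iff₀ h2n]
          nlinarith
        linarith
      · rw [hhi, lt_div_iff₀ hL] at hkhi
        have h5 : (q - p) * k / 2 ^ n < v - p := by
          rw [div_lt_iff₀ h2n]
          nlinarith
        linarith
  obtain ⟨f, hfc, hfmem, hfreal, hfden⟩ := dense_family c α β hvert2 hedge2 hinj2 hrange2
    ⟨Sum.inl ⟨α, hαD⟩, rfl, hupα⟩ ⟨Sum.inl ⟨β, hβD⟩, rfl, hdownβ⟩ hdense2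
  refine ⟨f, ⟨hfmem, ?_⟩, hfc, hfden⟩
  intro r hr
  have := hfreal (Sum.inl ⟨r, hr⟩)
  exact ⟨fun x hx => ⟨(hfmem x).1, this.1 x hx⟩, fun x hx => ⟨this.2 x hx, (hfmem x).2⟩⟩
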